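/- arXiv:2309.04627 — 2 statements merged into one kernel-verified Lean document; each statement's English description precedes it below -/
import Mathlib

section
/- Let γ, γ₁, …, γₙ be i.i.d. real-valued random variables. For any integer r with 1 ≤ r ≤ n, the probability (over the draw of the n samples) that Pr{γ > max^(r)(γ₁,…,γₙ)} > ε is at most Bin(r-1; n, ε), where Bin is the binomial CDF. In particular, if Bin(r-1;n,ε) ≤ δ then with probability at least 1-δ over the samples, Pr{γ > max^(r)(γ₁,…,γₙ)} ≤ ε. -/
open Filter MeasureTheory
open scoped ENNReal

/-- Binomial cumulative distribution function Bin(k;n,ε). -/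
noncomputable def binCDF (k n : ℕ) (ε : ℝ) : ℝ :=
  ∑ i ∈ Finset.range (k + 1), (n.choose i : ℝ) * ε ^ i * (1 - ε) ^ (n - i)

/-- Generalized max: the r-th largest element of a list of reals (default 0). -/
noncomputable def rmaxL (r : ℕ) (l : List ℝ) : ℝ :=
  (l.insertionSort (· ≥ ·)).getD (r - 1) 0

lemma binCDF_mono_k {k n : ℕ} {p : ℝ} (h0 : 0 ≤ p) (h1 : p ≤ 1) :
    binCDF k n p ≤ binCDF (k+1) n p := by
  unfold binCDF
  apply Finset.sum_le_sum_of_subset_of_nonneg (Finset.range_subset_range.2 (by omega))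
  intro i _ _
  have : (0:ℝ) ≤ 1 - p := by linarith
  positivity

lemma binCDF_full (n : ℕ) (p : ℝ) : binCDF n n p = 1 := by
  unfold binCDF
  have := add_pow p (1 - p) n
  simp only [add_sub_cancel, one_pow] at this
  conv_rhs => rw [this]
  exact Finset.sum_congr rfl fun i _ => by ring

lemma binCDF_pascal {k n : ℕ} (hkn : k + 1 ≤ n) (p : ℝ) :
    binCDF (k+1) (n+1) p = (1 - p) * binCDF (k+1) n p + p * binCDF k n p := by
  unfold binCDF
  rw [Finset.sum_range_succ' (fun i => ((n+1).choose i : ℝ) * p ^ i * (1 - p) ^ (n + 1 - i)) (k+1)]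
  rw [Finset.sum_range_succ' (fun i => (n.choose i : ℝ) * p ^ i * (1 - p) ^ (n - i)) (k+1)]
  have h1 : ∀ j ∈ Finset.range (k+1),
      (((n+1).choose (j+1) : ℝ)) * p ^ (j+1) * (1 - p) ^ (n + 1 - (j+1))
      = ((1-p) * ((n.choose (j+1) : ℝ) * p ^ (j+1) * (1 - p) ^ (n - (j+1))))
        + p * ((n.choose j : ℝ) * p ^ j * (1 - p) ^ (n - j)) := by
    intro j hj
    simp only [Finset.mem_range] at hj
    have e1 : n + 1 - (j+1) = (n - (j+1)) + 1 := by omega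
    have e3 : n - j = (n - (j+1)) + 1 := by omega
    rw [Nat.choose_succ_succ n j]
    push_cast
    rw [e3]
    simp only [Nat.succ_eq_add_one]
    ring
  rw [Finset.sum_congr rfl h1, Finset.sum_add_distrib, ← Finset.mul_sum, ← Finset.mul_sum]
  simp only [Nat.choose_zero_right, pow_zero, Nat.sub_zero, Nat.cast_one]
  ring

lemma binCDF_anti : ∀ n k, k ≤ n → ∀ p p' : ℝ, 0 ≤ p → p ≤ p' → p' ≤ 1 →
    binCDF k n p' ≤ binCDF k n p := by
  intro n
  induction n with
  | zero =>
    intro k hk p p' _ _ _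
    interval_cases k
    simp [binCDF]
  | succ n ih =>
    intro k hk p p' h0 hpp h1
    match k with
    | 0 =>
      have : ∀ q : ℝ, binCDF 0 (n+1) q = (1-q)^(n+1) := by
        intro q; simp [binCDF]
      rw [this, this]
      apply pow_le_pow_left₀ (by linarith) (by linarith)
    | (k+1) =>
      rcases eq_or_lt_of_le hk with heq | hlt
      · rw [heq, binCDF_full, binCDF_full]
      · have hkn : k + 1 ≤ n := by omega
        rw [binCDF_pascal hkn, binCDF_pascal hkn]
        have hA := ih (k+1) hkn p p' h0 hpp h1
        have hB := ih k (by omega) p p' h0 hpp h1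
        have hBA : binCDF k n p ≤ binCDF (k+1) n p := binCDF_mono_k h0 (by linarith)
        have hBA' : binCDF k n p' ≤ binCDF (k+1) n p' := binCDF_mono_k (by linarith) h1
        nlinarith [mul_nonneg (by linarith : (0:ℝ) ≤ 1 - p') (sub_nonneg.2 hA),
          mul_nonneg (by linarith : (0:ℝ) ≤ p') (sub_nonneg.2 hB),
          mul_nonneg (sub_nonneg.2 hpp) (sub_nonneg.2 hBA)]

lemma sorted_getElem_lt_iff (m : List ℝ) (hs : m.Pairwise (· ≥ ·)) (j : ℕ) (hj : j < m.length)
    (q : ℝ) : m[j] < q ↔ m.countP (fun x => decide (q ≤ x)) ≤ j := by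
  constructor
  · intro h
    have hsplit : m.countP (fun x => decide (q ≤ x)) =
        (m.take j).countP (fun x => decide (q ≤ x)) + (m.drop j).countP (fun x => decide (q ≤ x)) := by
      conv_lhs => rw [← List.take_append_drop j m]
      rw [List.countP_append]
    have hdrop : (m.drop j).countP (fun x => decide (q ≤ x)) = 0 := by
      rw [List.countP_eq_zero]
      intro x hx
      obtain ⟨i, hi, rfl⟩ := List.mem_iff_getElem.1 hx
      have hji : j + i < m.length := by
        simp [List.length_drop] at hi; omega
      rw [List.getElem_drop]
      have : m[j + i] ≤ m[j] := by
        have := hs.rel_get_of_le (a := ⟨j, hj⟩) (b := ⟨j + i, hji⟩) (by simp)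
        simpa [List.get_eq_getElem] using this
      simp only [decide_eq_true_eq]
      push_neg
      linarith
    have htake : (m.take j).countP (fun x => decide (q ≤ x)) ≤ j := by
      calc (m.take j).countP (fun x => decide (q ≤ x)) ≤ (m.take j).length := List.countP_le_length
        _ ≤ j := by simp [List.length_take]
    omega
  · intro h
    by_contra hc
    push_neg at hc
    have htake : (m.take (j+1)).countP (fun x => decide (q ≤ x)) = j + 1 := by
      have hlen : (m.take (j+1)).length = j + 1 := by simp [List.length_take]; omega
      rw [List.countP_eq_length.2, hlen]
      intro x hx
      obtain ⟨i, hi, rfl⟩ := List.mem_iff_getElem.1 hx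
      rw [List.getElem_take]
      have hij : i ≤ j := by omega
      have : m[j] ≤ m[i] := by
        have := hs.rel_get_of_le (a := ⟨i, by omega⟩) (b := ⟨j, hj⟩) (by simpa using hij)
        simpa [List.get_eq_getElem] using this
      simp only [decide_eq_true_eq]
      linarith
    have hsplit2 : m.countP (fun x => decide (q ≤ x)) =
        (m.take (j+1)).countP (fun x => decide (q ≤ x)) + (m.drop (j+1)).countP (fun x => decide (q ≤ x)) := by
      conv_lhs => rw [← List.take_append_drop (j+1) m]
      rw [List.countP_append]
    omega

lemma countP_ofFn_card {n : ℕ} (s : Fin n → ℝ) (q : ℝ) :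
    (List.ofFn s).countP (fun x => decide (q ≤ x)) = (Finset.univ.filter fun i => q ≤ s i).card := by
  rw [List.ofFn_eq_map, List.countP_map]
  rw [Finset.card_filter, Fin.sum_univ_def]
  rw [List.countP_eq_length_filter]
  induction List.finRange n with
  | nil => simp
  | cons a l ih =>
      by_cases h : q ≤ s a <;>
        simp [List.filter_cons, h, ih, Multiset.map_cons, Nat.add_comm]

lemma rmaxL_lt_iff {n r : ℕ} (hr1 : 1 ≤ r) (hrn : r ≤ n) (q : ℝ) (s : Fin n → ℝ) :
    rmaxL r (List.ofFn s) < q ↔ (Finset.univ.filter fun i => q ≤ s i).card ≤ r - 1 := by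
  set m := (List.ofFn s).insertionSort (· ≥ ·) with hm
  have hlen : m.length = n := by
    rw [hm, List.length_insertionSort, List.length_ofFn]
  have hsort : m.Pairwise (· ≥ ·) := List.pairwise_insertionSort _ _
  have hj : r - 1 < m.length := by omega
  have h1 : rmaxL r (List.ofFn s) = m[r-1] := by
    rw [rmaxL, List.getD_eq_getElem _ _ hj]
  have h2 := sorted_getElem_lt_iff m hsort (r-1) hj q
  have h3 : m.countP (fun x => decide (q ≤ x)) = (Finset.univ.filter fun i => q ≤ s i).card := by
    rw [← countP_ofFn_card s q]
    exact (List.perm_insertionSort _ _).countP_eq _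
  rw [h1, h2, h3]

/-- Probabilistic scaling (Property 1): for i.i.d. samples from W, the probability
that the tail beyond the r-th largest sample exceeds ε is at most Bin(r-1;n,ε);
hence if Bin(r-1;n,ε) ≤ δ, with probability at least 1-δ the tail is at most ε. -/
theorem probabilistic_scaling (W : Measure ℝ) [IsProbabilityMeasure W]
    (n r : ℕ) (hr1 : 1 ≤ r) (hrn : r ≤ n)
    (ε δ : ℝ) (hε : ε ∈ Set.Ioo (0 : ℝ) 1) (hδ : δ ∈ Set.Ioo (0 : ℝ) 1) :
    (Measure.pi fun _ : Fin n => W)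
        {s | W {γ : ℝ | γ > rmaxL r (List.ofFn s)} > ENNReal.ofReal ε}
      ≤ ENNReal.ofReal (binCDF (r - 1) n ε) ∧
    (binCDF (r - 1) n ε ≤ δ →
      (Measure.pi fun _ : Fin n => W)
          {s | W {γ : ℝ | γ > rmaxL r (List.ofFn s)} ≤ ENNReal.ofReal ε}
        ≥ 1 - ENNReal.ofReal δ) := by
  obtain ⟨hε0, hε1⟩ := hε
  obtain ⟨hδ0, hδ1⟩ := hδ
  set μ := Measure.pi fun _ : Fin n => W with hμ
  set A := {x : ℝ | ENNReal.ofReal ε < W (Set.Ioi x)} with hA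
  -- A is nonempty
  have hAne : A.Nonempty := by
    by_contra hne
    push_neg at hne
    have hle : ∀ x : ℝ, W (Set.Ioi x) ≤ ENNReal.ofReal ε := by
      intro x
      by_contra hx
      exact hne.subset (Set.mem_setOf.2 (not_le.1 hx)) |>.elim
    have hmono : Monotone (fun k : ℕ => Set.Ioi (-(k:ℝ))) := by
      intro k l hkl
      apply Set.Ioi_subset_Ioi
      have : (k:ℝ) ≤ l := by exact_mod_cast hkl
      linarith
    have huniv : (⋃ k : ℕ, Set.Ioi (-(k:ℝ))) = Set.univ := by
      ext x
      simp only [Set.mem_iUnion, Set.mem_Ioi, Set.mem_univ, iff_true]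
      obtain ⟨k, hk⟩ := exists_nat_gt (-x)
      exact ⟨k, by linarith⟩
    have := hmono.measure_iUnion (μ := W)
    rw [huniv, measure_univ] at this
    have h1 : (1 : ℝ≥0∞) ≤ ENNReal.ofReal ε := this ▸ iSup_le fun k => hle _
    exact absurd (h1.trans_lt (ENNReal.ofReal_lt_one.2 hε1)) (lt_irrefl _)
  -- A is bounded above
  have hAbdd : BddAbove A := by
    have hanti : Antitone (fun k : ℕ => Set.Ioi (k:ℝ)) := by
      intro k l hkl
      exact Set.Ioi_subset_Ioi (Nat.cast_le.2 hkl)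
    have hempty : (⋂ k : ℕ, Set.Ioi (k:ℝ)) = ∅ := by
      ext x
      simp only [Set.mem_iInter, Set.mem_Ioi, Set.mem_empty_iff_false, iff_false, not_forall, not_lt]
      obtain ⟨k, hk⟩ := exists_nat_gt x
      exact ⟨k, hk.le⟩
    have hinf := hanti.measure_iInter (μ := W)
      (fun k => (measurableSet_Ioi).nullMeasurableSet) ⟨0, measure_ne_top W _⟩
    rw [hempty, measure_empty] at hinf
    have : ⨅ k : ℕ, W (Set.Ioi (k:ℝ)) < ENNReal.ofReal ε := by
      rw [← hinf]; exact ENNReal.ofReal_pos.2 hε0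
    obtain ⟨k, hk⟩ := iInf_lt_iff.1 this
    refine ⟨k, fun x hx => ?_⟩
    by_contra hxk
    push_neg at hxk
    have : W (Set.Ioi x) ≤ W (Set.Ioi (k:ℝ)) := measure_mono (Set.Ioi_subset_Ioi hxk.le)
    exact absurd ((Set.mem_setOf.1 hx).trans_le this) (not_lt.2 hk.le)
  set q := sSup A with hqdef
  -- q characterization
  have hnotA : ∀ x : ℝ, q < x → W (Set.Ioi x) ≤ ENNReal.ofReal ε := by
    intro x hx
    by_contra h
    push_neg at h
    exact absurd (le_csSup hAbdd (Set.mem_setOf.2 h)) (not_le.2 hx)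
  have hqle : W (Set.Ioi q) ≤ ENNReal.ofReal ε := by
    have hmono : Monotone (fun k : ℕ => Set.Ioi (q + 1/((k:ℝ)+1))) := by
      intro k l hkl
      apply Set.Ioi_subset_Ioi
      have : 1/((l:ℝ)+1) ≤ 1/((k:ℝ)+1) := by
        apply one_div_le_one_div_of_le (by positivity)
        exact_mod_cast (by omega : k + 1 ≤ l + 1)
      linarith
    have hunion : (⋃ k : ℕ, Set.Ioi (q + 1/((k:ℝ)+1))) = Set.Ioi q := by
      ext x
      simp only [Set.mem_iUnion, Set.mem_Ioi]
      constructor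
      · rintro ⟨k, hk⟩
        have : (0:ℝ) < 1/((k:ℝ)+1) := by positivity
        linarith
      · intro hx
        obtain ⟨k, hk⟩ := exists_nat_one_div_lt (by linarith : (0:ℝ) < x - q)
        exact ⟨k, by linarith⟩
    have := hmono.measure_iUnion (μ := W)
    rw [hunion] at this
    rw [this]
    refine iSup_le fun k => hnotA _ ?_
    have : (0:ℝ) < 1/((k:ℝ)+1) := by positivity
    linarith
  have hq : ∀ x : ℝ, x < q ↔ ENNReal.ofReal ε < W (Set.Ioi x) := by
    intro x
    constructor
    · intro hx
      obtain ⟨a, haA, hxa⟩ := exists_lt_of_lt_csSup hAne hx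
      exact lt_of_lt_of_le haA (measure_mono (Set.Ioi_subset_Ioi hxa.le))
    · intro hx
      have hle : x ≤ q := le_csSup hAbdd (Set.mem_setOf.2 hx)
      rcases lt_or_eq_of_le hle with h | h
      · exact h
      · exfalso
        rw [h] at hx
        exact absurd hx (not_lt.2 hqle)
  -- the key quantile probability
  have ha : ENNReal.ofReal ε ≤ W (Set.Ici q) := by
    have hanti : Antitone (fun k : ℕ => Set.Ioi (q - 1/((k:ℝ)+1))) := by
      intro k l hkl
      apply Set.Ioi_subset_Ioi
      have : 1/((l:ℝ)+1) ≤ 1/((k:ℝ)+1) := by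
        apply one_div_le_one_div_of_le (by positivity)
        exact_mod_cast (by omega : k + 1 ≤ l + 1)
      linarith
    have hinter : (⋂ k : ℕ, Set.Ioi (q - 1/((k:ℝ)+1))) = Set.Ici q := by
      ext x
      simp only [Set.mem_iInter, Set.mem_Ioi, Set.mem_Ici]
      constructor
      · intro h
        by_contra hx
        push_neg at hx
        obtain ⟨k, hk⟩ := exists_nat_one_div_lt (by linarith : (0:ℝ) < q - x)
        exact absurd (h k) (not_lt.2 (by linarith))
      · intro h k
        have : (0:ℝ) < 1/((k:ℝ)+1) := by positivity
        linarith
    have hinf := hanti.measure_iInter (μ := W)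
      (fun k => measurableSet_Ioi.nullMeasurableSet) ⟨0, measure_ne_top W _⟩
    rw [hinter] at hinf
    rw [hinf]
    refine le_iInf fun k => ?_
    have : q - 1/((k:ℝ)+1) < q := by
      have : (0:ℝ) < 1/((k:ℝ)+1) := by positivity
      linarith
    exact ((hq _).1 this).le
  clear hAne hAbdd hnotA hqle
  -- rewrite the event
  classical
  set E := {s : Fin n → ℝ | (Finset.univ.filter fun i => q ≤ s i).card ≤ r - 1} with hE
  have hEeq : {s : Fin n → ℝ | W {γ : ℝ | γ > rmaxL r (List.ofFn s)} > ENNReal.ofReal ε} = E := by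
    ext s
    have hIoi : {γ : ℝ | γ > rmaxL r (List.ofFn s)} = Set.Ioi (rmaxL r (List.ofFn s)) := rfl
    simp only [Set.mem_setOf_eq, hIoi, gt_iff_lt, hE]
    rw [← hq, rmaxL_lt_iff hr1 hrn]
  set S : Finset (Finset (Fin n)) := Finset.univ.filter (fun T => T.card ≤ r - 1) with hS
  set C : Finset (Fin n) → Set (Fin n → ℝ) :=
    fun T => Set.univ.pi (fun i => if i ∈ T then Set.Ici q else Set.Iio q) with hC
  have hCT : ∀ T, C T = {s | Finset.univ.filter (fun i => q ≤ s i) = T} := by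
    intro T
    ext s
    simp only [hC, Set.mem_pi, Set.mem_univ, forall_true_left, Set.mem_setOf_eq]
    constructor
    · intro h
      apply Finset.ext
      intro i
      simp only [Finset.mem_filter, Finset.mem_univ, true_and]
      by_cases hi : i ∈ T
      · have := h i
        rw [if_pos hi] at this
        exact ⟨fun _ => hi, fun _ => this⟩
      · have := h i
        rw [if_neg hi] at this
        exact ⟨fun hq' => absurd (Set.mem_Iio.1 this) (not_lt.2 hq'), fun h' => absurd h' hi⟩
    · intro h i
      by_cases hi : i ∈ T
      · rw [if_pos hi]
        have hmem : i ∈ Finset.univ.filter (fun i => q ≤ s i) := h ▸ hi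
        exact Set.mem_Ici.2 (Finset.mem_filter.1 hmem).2
      · rw [if_neg hi]
        have : ¬ q ≤ s i := by
          intro hq'
          exact hi (h ▸ Finset.mem_filter.2 ⟨Finset.mem_univ i, hq'⟩)
        exact Set.mem_Iio.2 (not_le.1 this)
  have hCmeas : ∀ T, MeasurableSet (C T) := by
    intro T
    apply MeasurableSet.univ_pi
    intro i
    by_cases hi : i ∈ T
    · rw [if_pos hi]; exact measurableSet_Ici
    · rw [if_neg hi]; exact measurableSet_Iio
  have hEud : E = ⋃ T ∈ S, C T := by
    ext s
    simp only [hE, Set.mem_setOf_eq, Set.mem_iUnion, hS, Finset.mem_filter, Finset.mem_univ,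
      true_and, hCT, exists_prop]
    constructor
    · intro h
      exact ⟨Finset.univ.filter (fun i => q ≤ s i), h, rfl⟩
    · rintro ⟨T, hT, h⟩
      rw [h]; exact hT
  have hEmeas : MeasurableSet E := by
    rw [hEud]
    exact MeasurableSet.biUnion S.countable_toSet (fun T _ => hCmeas T)
  have hdisj : (S : Set (Finset (Fin n))).PairwiseDisjoint C := by
    intro T _ T' _ hne
    rw [Function.onFun, Set.disjoint_left]
    intro s hsT hsT'
    rw [hCT] at hsT hsT'
    exact hne (hsT.symm.trans hsT')
  set a := W (Set.Ici q) with haa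
  set b := W (Set.Iio q) with hbb
  have hCval : ∀ T : Finset (Fin n), μ (C T) = a ^ T.card * b ^ (n - T.card) := by
    intro T
    rw [hC, hμ, Measure.pi_pi]
    have : ∀ i : Fin n, W (if i ∈ T then Set.Ici q else Set.Iio q) = if i ∈ T then a else b := by
      intro i
      by_cases hi : i ∈ T <;> simp [hi, haa, hbb]
    rw [Finset.prod_congr rfl (fun i _ => this i), Finset.prod_ite, Finset.prod_const,
      Finset.prod_const]
    congr 1
    · congr 1
      simp [Finset.filter_univ_mem]
    · congr 1
      rw [Finset.filter_not, Finset.card_sdiff_of_subset (Finset.filter_subset _ _)]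
      simp [Finset.filter_univ_mem]
  have hmeasE : μ E = ∑ k ∈ Finset.range r, (n.choose k : ℝ≥0∞) * (a ^ k * b ^ (n - k)) := by
    rw [hEud, measure_biUnion_finset hdisj (fun T _ => hCmeas T)]
    have hSbU : S = (Finset.range r).biUnion (fun k => Finset.powersetCard k Finset.univ) := by
      ext T
      simp only [hS, Finset.mem_filter, Finset.mem_univ, true_and, Finset.mem_biUnion,
        Finset.mem_range, Finset.mem_powersetCard_univ]
      constructor
      · intro h; exact ⟨T.card, by omega, rfl⟩
      · rintro ⟨k, hk, rfl⟩; omega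
    rw [hSbU, Finset.sum_biUnion]
    · apply Finset.sum_congr rfl
      intro k _
      rw [Finset.sum_congr rfl (fun T hT => by
        rw [hCval T, (Finset.mem_powersetCard_univ.1 hT : T.card = k)]),
        Finset.sum_const, Finset.card_powersetCard, Finset.card_univ, Fintype.card_fin,
        nsmul_eq_mul]
    · intro k _ l _ hkl
      rw [Function.onFun, Finset.disjoint_left]
      intro T hT hT'
      rw [Finset.mem_powersetCard_univ] at hT hT'
      exact hkl (hT ▸ hT')
  -- convert to real numbers
  have haT : a ≠ ⊤ := measure_ne_top W _
  have ha1 : a ≤ 1 := prob_le_one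
  set pa := a.toReal with hpa
  have hpa0 : 0 ≤ pa := ENNReal.toReal_nonneg
  have hpa1 : pa ≤ 1 := by
    rw [hpa]
    exact ENNReal.toReal_le_of_le_ofReal zero_le_one (by simpa using ha1)
  have hpaε : ε ≤ pa := (ENNReal.ofReal_le_iff_le_toReal haT).1 ha
  have haof : a = ENNReal.ofReal pa := (ENNReal.ofReal_toReal haT).symm
  have hb : b = ENNReal.ofReal (1 - pa) := by
    have hcompl : Set.Iio q = (Set.Ici q)ᶜ := Set.compl_Ici.symm
    rw [hbb, hcompl, measure_compl measurableSet_Ici haT, measure_univ,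
      ← ENNReal.ofReal_one, ← haa, haof, ← ENNReal.ofReal_sub _ hpa0]
  have hsum : μ E = ENNReal.ofReal (binCDF (r-1) n pa) := by
    rw [hmeasE]
    have hterm : ∀ k ∈ Finset.range r, (n.choose k : ℝ≥0∞) * (a ^ k * b ^ (n - k))
        = ENNReal.ofReal ((n.choose k : ℝ) * pa ^ k * (1 - pa) ^ (n - k)) := by
      intro k _
      have h1pa : (0:ℝ) ≤ 1 - pa := by linarith
      rw [haof, hb, ← ENNReal.ofReal_pow hpa0, ← ENNReal.ofReal_pow h1pa,
        ← ENNReal.ofReal_mul (by positivity), ← ENNReal.ofReal_natCast,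
        ← ENNReal.ofReal_mul (by positivity)]
      congr 1
      ring
    rw [Finset.sum_congr rfl hterm, ← ENNReal.ofReal_sum_of_nonneg]
    · congr 1
      rw [binCDF]
      have : r - 1 + 1 = r := by omega
      rw [this]
    · intro k _
      have h1pa : (0:ℝ) ≤ 1 - pa := by linarith
      positivity
  have hfirst : μ {s | W {γ : ℝ | γ > rmaxL r (List.ofFn s)} > ENNReal.ofReal ε}
      ≤ ENNReal.ofReal (binCDF (r-1) n ε) := by
    rw [hEeq, hsum]
    exact ENNReal.ofReal_le_ofReal (binCDF_anti n (r-1) (by omega) ε pa hε0.le hpaε hpa1)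
  refine ⟨hfirst, fun hBδ => ?_⟩
  have hcompl : {s : Fin n → ℝ | W {γ : ℝ | γ > rmaxL r (List.ofFn s)} ≤ ENNReal.ofReal ε}
      = Eᶜ := by
    rw [← hEeq]
    ext s
    simp [not_lt]
  rw [hcompl, measure_compl hEmeas (measure_ne_top _ _), measure_univ]
  have hEδ : μ E ≤ ENNReal.ofReal δ := by
    rw [hsum]
    exact le_trans (ENNReal.ofReal_le_ofReal
      (binCDF_anti n (r-1) (by omega) ε pa hε0.le hpaε hpa1)) (ENNReal.ofReal_le_ofReal hBδ)
  exact tsub_le_tsub_left hEδ 1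
end

section
/- Let β ∈ (0,1), ε ∈ (0,1), δ ∈ (0,1), and set κ = ((√β + √(2-β)) / (√2 (1-β)))². If n ≥ (κ/ε) ln(1/δ) and r = ⌈βεn⌉, then Bin(r-1; n, ε) ≤ δ. -/
/-- The sample-complexity constant κ of the explicit probabilistic-scaling bound. -/
noncomputable def kappa (β : ℝ) : ℝ :=
  ((Real.sqrt β + Real.sqrt (2 - β)) / (Real.sqrt 2 * (1 - β))) ^ 2

/-- Quadratic lower bound on the exponential. -/
lemma exp_quad_lb {u : ℝ} (hu : 0 ≤ u) : 1 + u + u ^ 2 / 2 ≤ Real.exp u := by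
  have h := Real.sum_le_exp_of_nonneg hu 3
  simp [Finset.sum_range_succ, Nat.factorial] at h
  nlinarith [h]

/-- Key inequality: √(β(2-β)) ≥ β(1 - ln β) for β ∈ (0,1). -/
lemma sqrt_ge (β : ℝ) (h0 : 0 < β) (h1 : β < 1) :
    β * (1 - Real.log β) ≤ Real.sqrt (β * (2 - β)) := by
  have hlog : Real.log β < 0 := Real.log_neg h0 h1
  have hx : 0 ≤ β * (1 - Real.log β) := by nlinarith
  have hy : 0 ≤ β * (2 - β) := by nlinarith
  rw [Real.le_sqrt hx hy]
  have hu0 : (0:ℝ) ≤ -Real.log β := by linarith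
  have hq : 1 + (-Real.log β) + (-Real.log β) ^ 2 / 2 ≤ Real.exp (-Real.log β) :=
    exp_quad_lb hu0
  have h3 : β ^ 2 * Real.exp (-Real.log β) = β := by
    rw [Real.exp_neg, Real.exp_log h0, pow_two, mul_assoc,
      mul_inv_cancel₀ (ne_of_gt h0), mul_one]
  have h4 : β ^ 2 * (1 + (-Real.log β) + (-Real.log β) ^ 2 / 2) ≤ β := by
    calc β ^ 2 * (1 + (-Real.log β) + (-Real.log β) ^ 2 / 2)
        ≤ β ^ 2 * Real.exp (-Real.log β) := mul_le_mul_of_nonneg_left hq (sq_nonneg β)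
      _ = β := h3
  nlinarith [h4]

/-- κ is positive on (0,1). -/
lemma kappa_pos (β : ℝ) (h0 : 0 < β) (h1 : β < 1) : 0 < kappa β := by
  rw [kappa, div_pow]
  apply div_pos
  · have ha : 0 < Real.sqrt (2 - β) := Real.sqrt_pos.mpr (by linarith)
    have hb : 0 ≤ Real.sqrt β := Real.sqrt_nonneg _
    positivity
  · have h2 : 0 < Real.sqrt 2 := Real.sqrt_pos.mpr (by norm_num)
    have h3 : 0 < Real.sqrt 2 * (1 - β) := by nlinarith
    positivity

/-- κ(β) · ((1-β) + β ln β) ≥ 1. -/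
lemma kappa_mul_ge (β : ℝ) (h0 : 0 < β) (h1 : β < 1) :
    1 ≤ kappa β * ((1 - β) + β * Real.log β) := by
  set a := Real.sqrt β
  set b := Real.sqrt (2 - β)
  set s := Real.sqrt (β * (2 - β)) with hs
  have ha2 : a ^ 2 = β := Real.sq_sqrt h0.le
  have hb2 : b ^ 2 = 2 - β := Real.sq_sqrt (by linarith)
  have hab : a * b = s := (Real.sqrt_mul h0.le _).symm
  have hs2 : s ^ 2 = β * (2 - β) := Real.sq_sqrt (by nlinarith)
  have hs0 : 0 ≤ s := Real.sqrt_nonneg _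
  have hs1 : s < 1 := by nlinarith [sq_nonneg (1 - β)]
  have hsqrt2 : (Real.sqrt 2) ^ 2 = 2 := Real.sq_sqrt (by norm_num)
  have h1β : (0:ℝ) < 1 - β := by linarith
  have hk : kappa β = (1 + s) / (1 - β) ^ 2 := by
    rw [kappa, div_pow, mul_pow, hsqrt2]
    have : (a + b) ^ 2 = 2 * (1 + s) := by nlinarith
    rw [this]; field_simp
  have hkpos : 0 < kappa β := by
    rw [hk]; positivity
  have hk1 : kappa β * (1 - s) = 1 := by
    rw [hk]
    have h1β2 : (1 - β) ^ 2 = (1 + s) * (1 - s) := by nlinarith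
    rw [h1β2]
    have ha : (1 + s) ≠ 0 := by linarith
    have hb : (1 - s) ≠ 0 := by linarith
    field_simp
  have hge : 1 - s ≤ (1 - β) + β * Real.log β := by
    have := sqrt_ge β h0 h1
    rw [← hs] at this
    nlinarith
  calc (1:ℝ) = kappa β * (1 - s) := hk1.symm
    _ ≤ kappa β * ((1 - β) + β * Real.log β) :=
        mul_le_mul_of_nonneg_left hge hkpos.le

/-- Explicit sample-complexity bound (Corollary 1): with r = ⌈βεn⌉ and
n ≥ (κ/ε) ln(1/δ), the binomial tail condition Bin(r-1;n,ε) ≤ δ holds. -/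
theorem explicit_sample_complexity_bound
    (β ε δ : ℝ) (hβ : β ∈ Set.Ioo (0 : ℝ) 1) (hε : ε ∈ Set.Ioo (0 : ℝ) 1)
    (hδ : δ ∈ Set.Ioo (0 : ℝ) 1) (n : ℕ)
    (hn : (n : ℝ) ≥ kappa β / ε * Real.log (1 / δ)) :
    binCDF (⌈β * ε * n⌉₊ - 1) n ε ≤ δ := by
  obtain ⟨hβ0, hβ1⟩ := hβ
  obtain ⟨hε0, hε1⟩ := hε
  obtain ⟨hδ0, hδ1⟩ := hδ
  set k : ℕ := ⌈β * ε * n⌉₊ - 1 with hkdef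
  have hx0 : 0 ≤ β * ε * (n : ℝ) := by positivity
  -- (k : ℝ) ≤ β ε n
  have hkle : (k : ℝ) ≤ β * ε * n := by
    rcases Nat.eq_zero_or_pos ⌈β * ε * n⌉₊ with h | h
    · simp [hkdef, h, hx0]
    · have : (k : ℝ) = (⌈β * ε * n⌉₊ : ℝ) - 1 := by
        rw [hkdef, Nat.cast_sub h]; norm_num
      rw [this]
      have := Nat.ceil_lt_add_one hx0
      linarith
  -- k ≤ n
  have hkn : k ≤ n := by
    have hc : ⌈β * ε * n⌉₊ ≤ n := by
      apply Nat.ceil_le.mpr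
      have hβε1 : β * ε ≤ 1 := by nlinarith
      nlinarith [mul_le_mul_of_nonneg_right hβε1 (Nat.cast_nonneg (α := ℝ) n)]
    omega
  -- Step 1: binCDF k n ε ≤ (1/β)^k * (β*ε + (1-ε))^n
  have hβε0 : 0 ≤ β * ε := by positivity
  have h1ε : (0:ℝ) ≤ 1 - ε := by linarith
  have step1 : binCDF k n ε ≤ (1/β)^k * (β * ε + (1 - ε))^n := by
    rw [binCDF, add_pow, Finset.mul_sum]
    calc ∑ i ∈ Finset.range (k + 1), (n.choose i : ℝ) * ε ^ i * (1 - ε) ^ (n - i)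
        ≤ ∑ i ∈ Finset.range (k + 1),
            (1/β)^k * ((β * ε) ^ i * (1 - ε) ^ (n - i) * (n.choose i : ℝ)) := by
          apply Finset.sum_le_sum
          intro i hi
          have hik : i ≤ k := Nat.lt_succ_iff.mp (Finset.mem_range.mp hi)
          have hpow : β ^ k ≤ β ^ i := pow_le_pow_of_le_one hβ0.le hβ1.le hik
          have hβk : (0:ℝ) < β ^ k := pow_pos hβ0 k
          have h1 : (1:ℝ) ≤ (1/β)^k * β ^ i := by
            rw [div_pow, one_pow, div_mul_eq_mul_div, le_div_iff₀ hβk]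
            linarith
          have hterm : (0:ℝ) ≤ (n.choose i : ℝ) * ε ^ i * (1 - ε) ^ (n - i) := by
            positivity
          calc (n.choose i : ℝ) * ε ^ i * (1 - ε) ^ (n - i)
              = 1 * ((n.choose i : ℝ) * ε ^ i * (1 - ε) ^ (n - i)) := by ring
            _ ≤ ((1/β)^k * β ^ i) * ((n.choose i : ℝ) * ε ^ i * (1 - ε) ^ (n - i)) :=
                mul_le_mul_of_nonneg_right h1 hterm
            _ = (1/β)^k * ((β * ε) ^ i * (1 - ε) ^ (n - i) * (n.choose i : ℝ)) := by
                rw [mul_pow]; ring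
      _ ≤ ∑ i ∈ Finset.range (n + 1),
            (1/β)^k * ((β * ε) ^ i * (1 - ε) ^ (n - i) * (n.choose i : ℝ)) := by
          apply Finset.sum_le_sum_of_subset_of_nonneg
          · exact Finset.range_subset_range.mpr (by omega)
          · intro i _ _
            positivity
  -- Step 2: bound by exponential
  have hlogβ : 0 ≤ Real.log (1/β) := by
    apply Real.log_nonneg
    rw [le_div_iff₀ hβ0]; linarith
  have step2 : (1/β)^k * (β * ε + (1 - ε))^n
      ≤ Real.exp ((k : ℝ) * Real.log (1/β) - (n : ℝ) * (ε * (1 - β))) := by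
    have h2a : (1/β)^k = Real.exp ((k : ℝ) * Real.log (1/β)) := by
      rw [Real.exp_nat_mul, Real.exp_log (by positivity)]
    have hbase : β * ε + (1 - ε) = 1 + (-(ε * (1 - β))) := by ring
    have h2b : (β * ε + (1 - ε))^n ≤ Real.exp (-(ε * (1 - β))) ^ n := by
      apply pow_le_pow_left₀ (by nlinarith)
      rw [hbase]
      have := Real.add_one_le_exp (-(ε * (1 - β)))
      linarith
    calc (1/β)^k * (β * ε + (1 - ε))^n
        ≤ Real.exp ((k : ℝ) * Real.log (1/β)) * Real.exp (-(ε * (1 - β))) ^ n := by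
          rw [h2a]
          exact mul_le_mul_of_nonneg_left h2b (Real.exp_pos _).le
      _ = Real.exp ((k : ℝ) * Real.log (1/β) - (n : ℝ) * (ε * (1 - β))) := by
          rw [← Real.exp_nat_mul, ← Real.exp_add]; ring_nf
  -- Step 3: the exponent is at most log δ
  have hL : 0 < Real.log (1 / δ) := Real.log_pos (by rw [lt_div_iff₀ hδ0]; linarith)
  have hkappa_pos : 0 < kappa β :=
    kappa_pos β hβ0 hβ1
  have hA : 0 < (1 - β) + β * Real.log β := by
    nlinarith [kappa_mul_ge β hβ0 hβ1]
  have hnε : (n : ℝ) * ε * ((1 - β) + β * Real.log β) ≥ Real.log (1 / δ) := by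
    have h1 : (n : ℝ) * ε ≥ kappa β * Real.log (1 / δ) := by
      rw [ge_iff_le, ← div_le_iff₀ hε0]
      calc kappa β * Real.log (1 / δ) / ε = kappa β / ε * Real.log (1 / δ) := by ring
        _ ≤ n := hn
    calc (n : ℝ) * ε * ((1 - β) + β * Real.log β)
        ≥ kappa β * Real.log (1 / δ) * ((1 - β) + β * Real.log β) :=
          mul_le_mul_of_nonneg_right h1 hA.le
      _ = Real.log (1 / δ) * (kappa β * ((1 - β) + β * Real.log β)) := by ring
      _ ≥ Real.log (1 / δ) * 1 :=
          mul_le_mul_of_nonneg_left (kappa_mul_ge β hβ0 hβ1) hL.le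
      _ = Real.log (1 / δ) := by ring
  have hexp : (k : ℝ) * Real.log (1/β) - (n : ℝ) * (ε * (1 - β)) ≤ Real.log δ := by
    have hlog1β : Real.log (1/β) = -Real.log β := by
      rw [one_div, Real.log_inv]
    have hklog : (k : ℝ) * Real.log (1/β) ≤ β * ε * n * Real.log (1/β) :=
      mul_le_mul_of_nonneg_right hkle hlogβ
    have hlogδ : Real.log (1 / δ) = -Real.log δ := by
      rw [one_div, Real.log_inv]
    rw [hlog1β] at hklog ⊢
    rw [hlogδ] at hnε
    nlinarith [hnε, hklog]
  calc binCDF k n ε ≤ (1/β)^k * (β * ε + (1 - ε))^n := step1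
    _ ≤ Real.exp ((k : ℝ) * Real.log (1/β) - (n : ℝ) * (ε * (1 - β))) := step2
    _ ≤ Real.exp (Real.log δ) := Real.exp_le_exp.mpr hexp
    _ = δ := Real.exp_log hδ0
end
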